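/- There exists a universal constant α > 0 such that for every smoothness parameter r with 1/2 < r ≤ 1, and all β₀, β₁ > 0 satisfying β₀ + β₁·Σ_{k=1}^∞ k^{−2r} = 1, the Korobov kernel K(x) := β₀ + β₁·Σ_{k=1}^∞ k^{−2r} cos(2πkx) satisfies K(x) ≥ 1 − α·x^{2r−1} for all x with 0 ≤ x ≤ 1/(√2·π). -/

import Mathlib

open scoped ENNReal NNReal

private lemma sumf_aux (s : ℝ) (hs : 1 < s) :
    Summable (fun k : ℕ => ((k : ℝ) + 1) ^ (-s)) := by
  have h := Real.summable_nat_rpow.mpr (by linarith : -s < -1)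
  refine ((summable_nat_add_iff 1).mpr h).congr fun n => ?_
  push_cast
  ring_nf

private lemma tail_block_aux (s : ℝ) (hs : 1 < s) (N : ℕ) (hN : 0 < N) :
    ∑' i : ℕ, ((N : ℝ) + 1 + i) ^ (-s)
      ≤ (N : ℝ) ^ (1 - s) * ∑' k : ℕ, ((k : ℝ) + 1) ^ (-s) := by
  haveI : NeZero N := ⟨hN.ne'⟩
  have hNR : (0:ℝ) < N := by exact_mod_cast hN
  have hf := sumf_aux s hs
  set G : ℕ × Fin N → ℝ := fun p => (N : ℝ) ^ (-s) * ((p.1 : ℝ) + 1) ^ (-s) with hG_def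
  have hGnn : ∀ p, 0 ≤ G p := fun p =>
    mul_nonneg (Real.rpow_nonneg hNR.le _) (Real.rpow_nonneg (by positivity) _)
  have hfib : ∀ q : ℕ, (∑' t : Fin N, G (q, t)) = (N : ℝ) * ((N : ℝ) ^ (-s) * ((q : ℝ) + 1) ^ (-s)) := by
    intro q
    rw [tsum_fintype]
    simp [hG_def, Finset.sum_const, Finset.card_univ, nsmul_eq_mul]
  have hG : Summable G := by
    refine (summable_prod_of_nonneg hGnn).mpr ⟨fun q => Summable.of_finite, ?_⟩
    refine Summable.congr ((hf.mul_left ((N:ℝ)^(-s))).mul_left (N:ℝ)) fun q => ?_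
    rw [hfib q]
  have hFsum : Summable (fun i : ℕ => G (Nat.divModEquiv N i)) :=
    ((Nat.divModEquiv N).summable_iff).mpr hG
  have hB : Summable (fun i : ℕ => ((N : ℝ) + 1 + i) ^ (-s)) := by
    refine ((summable_nat_add_iff N).mpr hf).congr fun i => ?_
    congr 1
    push_cast
    ring
  have hle : ∀ i : ℕ, ((N : ℝ) + 1 + i) ^ (-s) ≤ G (Nat.divModEquiv N i) := by
    intro i
    have h1 : G (Nat.divModEquiv N i) = (N : ℝ) ^ (-s) * (((i / N : ℕ) : ℝ) + 1) ^ (-s) := rfl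
    rw [h1, ← Real.mul_rpow hNR.le (by positivity)]
    apply Real.rpow_le_rpow_of_nonpos
    · positivity
    · have hnat : (N * (i / N + 1) : ℕ) ≤ N + i := by
        have h := Nat.div_mul_le_self i N
        calc N * (i / N + 1) = i / N * N + N := by ring
          _ ≤ i + N := by omega
          _ = N + i := by ring
      have h2 : ((N * (i / N + 1) : ℕ) : ℝ) ≤ ((N + i : ℕ) : ℝ) := by exact_mod_cast hnat
      push_cast at h2
      linarith
    · linarith
  have key := Summable.tsum_le_tsum hle hB hFsum
  have heq : (∑' i : ℕ, G (Nat.divModEquiv N i)) = (N : ℝ) ^ (1 - s) * ∑' k : ℕ, ((k : ℝ) + 1) ^ (-s) := by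
    rw [(Nat.divModEquiv N).tsum_eq G]
    rw [Summable.tsum_prod' hG fun q => Summable.of_finite]
    have : (fun q : ℕ => ∑' t : Fin N, G (q, t))
        = fun q : ℕ => (N : ℝ) * ((N : ℝ) ^ (-s) * ((q : ℝ) + 1) ^ (-s)) := funext hfib
    rw [this]
    rw [tsum_mul_left, tsum_mul_left]
    rw [show (N:ℝ) ^ (1-s) = (N:ℝ) * (N:ℝ) ^ (-s) by
      rw [show (1-s) = 1 + (-s) by ring, Real.rpow_add hNR, Real.rpow_one]]
    ring
  linarith [key, heq ▸ key]

set_option maxHeartbeats 2000000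

/-- Local polynomial lower bound for the Korobov kernel of
low smoothness: there is a universal constant `α > 0` such that for all
`1/2 < r ≤ 1` and `β₀, β₁ > 0` with `β₀ + β₁ ζ(2r) = 1`, the kernel
`K(x) = β₀ + β₁ Σ_{k≥1} k^{−2r} cos(2πkx)` satisfies
`K(x) ≥ 1 − α x^{2r−1}` for `0 ≤ x ≤ 1/(√2 π)`. -/
theorem stmt14 :
    ∃ α : ℝ, 0 < α ∧
      ∀ r : ℝ, 1/2 < r → r ≤ 1 →
      ∀ β₀ β₁ : ℝ, 0 < β₀ → 0 < β₁ →
        β₀ + β₁ * (∑' k : ℕ, ((k : ℝ) + 1) ^ (-(2 * r))) = 1 →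
        ∀ x : ℝ, 0 ≤ x → x ≤ 1 / (Real.sqrt 2 * Real.pi) →
          1 - α * x ^ (2 * r - 1)
            ≤ β₀ + β₁ * ∑' k : ℕ, ((k : ℝ) + 1) ^ (-(2 * r)) *
                Real.cos (2 * Real.pi * ((k : ℝ) + 1) * x) := by
  refine ⟨40, by norm_num, ?_⟩
  intro r hr hr1 β₀ β₁ hb0 hb1 hsum x hx0 hx1
  have hs1 : 1 < 2 * r := by linarith
  have hs2 : 2 * r ≤ 2 := by linarith
  have hf : Summable (fun k : ℕ => ((k : ℝ) + 1) ^ (-(2 * r))) := sumf_aux _ hs1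
  have hfnn : ∀ k : ℕ, 0 ≤ ((k : ℝ) + 1) ^ (-(2 * r)) :=
    fun k => Real.rpow_nonneg (by positivity) _
  have hgc : Summable (fun k : ℕ =>
      ((k : ℝ) + 1) ^ (-(2 * r)) * Real.cos (2 * Real.pi * ((k : ℝ) + 1) * x)) := by
    refine Summable.of_norm_bounded hf fun k => ?_
    rw [Real.norm_eq_abs, abs_mul, abs_of_nonneg (hfnn k)]
    exact mul_le_of_le_one_right (hfnn k) (Real.abs_cos_le_one _)
  have hqnn : ∀ k : ℕ, 0 ≤ ((k : ℝ) + 1) ^ (-(2 * r)) *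
      (1 - Real.cos (2 * Real.pi * ((k : ℝ) + 1) * x)) :=
    fun k => mul_nonneg (hfnn k)
      (by linarith [Real.cos_le_one (2 * Real.pi * ((k : ℝ) + 1) * x)])
  have hq : Summable (fun k : ℕ => ((k : ℝ) + 1) ^ (-(2 * r)) *
      (1 - Real.cos (2 * Real.pi * ((k : ℝ) + 1) * x))) := by
    refine Summable.of_nonneg_of_le hqnn (fun k => ?_) (hf.mul_left 2)
    have h2 : 1 - Real.cos (2 * Real.pi * ((k : ℝ) + 1) * x) ≤ 2 := by
      linarith [Real.neg_one_le_cos (2 * Real.pi * ((k : ℝ) + 1) * x)]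
    calc ((k : ℝ) + 1) ^ (-(2 * r)) * (1 - Real.cos (2 * Real.pi * ((k : ℝ) + 1) * x))
        ≤ ((k : ℝ) + 1) ^ (-(2 * r)) * 2 := mul_le_mul_of_nonneg_left h2 (hfnn k)
      _ = 2 * ((k : ℝ) + 1) ^ (-(2 * r)) := by ring
  have hS1 : 1 ≤ ∑' k : ℕ, ((k : ℝ) + 1) ^ (-(2 * r)) := by
    have h0 := Summable.le_tsum hf 0 (fun i _ => hfnn i)
    simpa using h0
  have hb1S : β₁ * (∑' k : ℕ, ((k : ℝ) + 1) ^ (-(2 * r))) ≤ 1 := by linarith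
  have hb11 : β₁ ≤ 1 := by nlinarith
  suffices hkey : β₁ * ∑' k : ℕ, ((k : ℝ) + 1) ^ (-(2 * r)) *
      (1 - Real.cos (2 * Real.pi * ((k : ℝ) + 1) * x)) ≤ 40 * x ^ (2 * r - 1) by
    have tsub : (∑' k : ℕ, ((k : ℝ) + 1) ^ (-(2 * r)) *
          (1 - Real.cos (2 * Real.pi * ((k : ℝ) + 1) * x)))
        = (∑' k : ℕ, ((k : ℝ) + 1) ^ (-(2 * r)))
          - ∑' k : ℕ, ((k : ℝ) + 1) ^ (-(2 * r)) *
              Real.cos (2 * Real.pi * ((k : ℝ) + 1) * x) := by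
      rw [← Summable.tsum_sub hf hgc]
      exact tsum_congr fun k => by ring
    rw [tsub, mul_sub] at hkey
    linarith
  rcases hx0.eq_or_lt with h0 | hxpos
  · rw [← h0, Real.zero_rpow (by intro h; rw [sub_eq_zero] at h; linarith)]
    simp
  -- positive case
  have hpi := Real.pi_gt_three
  have hpipos := Real.pi_pos
  have hsq2 : (1 : ℝ) ≤ Real.sqrt 2 := by
    rw [show (1:ℝ) = Real.sqrt 1 from Real.sqrt_one.symm]
    exact Real.sqrt_le_sqrt (by norm_num)
  have hx13 : x ≤ 1 / 3 := by
    have h3 : (3 : ℝ) ≤ Real.sqrt 2 * Real.pi := by nlinarith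
    have := one_div_le_one_div_of_le (by norm_num : (0:ℝ) < 3) h3
    linarith
  set N := Nat.floor (1 / x) with hN_def
  have hNR1 : (1 : ℝ) ≤ 1 / x := by rw [le_div_iff₀ hxpos]; linarith
  have hN1 : 1 ≤ N := Nat.le_floor (by exact_mod_cast hNR1)
  have hNpos : 0 < N := hN1
  have hNRpos : (0 : ℝ) < N := by exact_mod_cast hNpos
  have hNle : (N : ℝ) ≤ 1 / x := Nat.floor_le (by positivity)
  have hNgt : 1 / x < (N : ℝ) + 1 := Nat.lt_floor_add_one _
  have hN1R : (1 : ℝ) ≤ N := by exact_mod_cast hN1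
  have h2Nx : 1 ≤ 2 * (N : ℝ) * x := by
    have h := (div_lt_iff₀ hxpos).mp hNgt
    nlinarith
  have hxp_nn : 0 ≤ x ^ (2 * r - 1) := Real.rpow_nonneg hxpos.le _
  -- head bound
  have hhead : ∑ k ∈ Finset.range N, ((k : ℝ) + 1) ^ (-(2 * r)) *
      (1 - Real.cos (2 * Real.pi * ((k : ℝ) + 1) * x))
      ≤ 2 * Real.pi ^ 2 * x ^ (2 * r - 1) := by
    have hterm : ∀ k ∈ Finset.range N, ((k : ℝ) + 1) ^ (-(2 * r)) *
        (1 - Real.cos (2 * Real.pi * ((k : ℝ) + 1) * x))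
        ≤ 2 * Real.pi ^ 2 * x ^ 2 * (N : ℝ) ^ (2 - 2 * r) := by
      intro k hk
      have hkN : (k : ℝ) + 1 ≤ N := by
        have : k + 1 ≤ N := Finset.mem_range.mp hk
        exact_mod_cast this
      have hkpos : (0 : ℝ) < (k : ℝ) + 1 := by positivity
      have h1c : 1 - Real.cos (2 * Real.pi * ((k : ℝ) + 1) * x)
          ≤ (2 * Real.pi * ((k : ℝ) + 1) * x) ^ 2 / 2 := by
        linarith [Real.one_sub_sq_div_two_le_cos (x := 2 * Real.pi * ((k : ℝ) + 1) * x)]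
      have hcomb : ((k : ℝ) + 1) ^ (-(2 * r)) * ((k : ℝ) + 1) ^ (2 : ℕ)
          = ((k : ℝ) + 1) ^ (2 - 2 * r) := by
        rw [← Real.rpow_natCast ((k : ℝ) + 1) 2, ← Real.rpow_add hkpos]
        congr 1
        push_cast
        ring
      calc ((k : ℝ) + 1) ^ (-(2 * r)) * (1 - Real.cos (2 * Real.pi * ((k : ℝ) + 1) * x))
          ≤ ((k : ℝ) + 1) ^ (-(2 * r)) * ((2 * Real.pi * ((k : ℝ) + 1) * x) ^ 2 / 2) :=
            mul_le_mul_of_nonneg_left h1c (hfnn k)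
        _ = 2 * Real.pi ^ 2 * x ^ 2 * (((k : ℝ) + 1) ^ (-(2 * r)) * ((k : ℝ) + 1) ^ (2 : ℕ)) := by
            ring
        _ = 2 * Real.pi ^ 2 * x ^ 2 * ((k : ℝ) + 1) ^ (2 - 2 * r) := by rw [hcomb]
        _ ≤ 2 * Real.pi ^ 2 * x ^ 2 * (N : ℝ) ^ (2 - 2 * r) := by
            have := Real.rpow_le_rpow hkpos.le hkN (by linarith : (0:ℝ) ≤ 2 - 2 * r)
            have hc : (0:ℝ) ≤ 2 * Real.pi ^ 2 * x ^ 2 := by positivity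
            exact mul_le_mul_of_nonneg_left this hc
    have hsum1 : ∑ k ∈ Finset.range N, ((k : ℝ) + 1) ^ (-(2 * r)) *
        (1 - Real.cos (2 * Real.pi * ((k : ℝ) + 1) * x))
        ≤ (N : ℝ) * (2 * Real.pi ^ 2 * x ^ 2 * (N : ℝ) ^ (2 - 2 * r)) := by
      calc _ ≤ ∑ _k ∈ Finset.range N, 2 * Real.pi ^ 2 * x ^ 2 * (N : ℝ) ^ (2 - 2 * r) :=
            Finset.sum_le_sum hterm
        _ = (N : ℝ) * (2 * Real.pi ^ 2 * x ^ 2 * (N : ℝ) ^ (2 - 2 * r)) := by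
            rw [Finset.sum_const, Finset.card_range, nsmul_eq_mul]
    have e1 : (N : ℝ) * (N : ℝ) ^ (2 - 2 * r) = (N : ℝ) ^ (3 - 2 * r) := by
      rw [show (3 - 2 * r) = 1 + (2 - 2 * r) by ring, Real.rpow_add hNRpos, Real.rpow_one]
    have e2 : (N : ℝ) ^ (3 - 2 * r) ≤ (1 / x) ^ (3 - 2 * r) :=
      Real.rpow_le_rpow hNRpos.le hNle (by linarith)
    have e3 : (1 / x) ^ (3 - 2 * r) = x ^ (2 * r - 3) := by
      rw [one_div, Real.inv_rpow hxpos.le, ← Real.rpow_neg hxpos.le,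
        show -(3 - 2 * r) = 2 * r - 3 by ring]
    have e4 : x ^ 2 * x ^ (2 * r - 3) = x ^ (2 * r - 1) := by
      rw [← Real.rpow_natCast x 2, ← Real.rpow_add hxpos]
      congr 1
      push_cast
      ring
    calc ∑ k ∈ Finset.range N, ((k : ℝ) + 1) ^ (-(2 * r)) *
        (1 - Real.cos (2 * Real.pi * ((k : ℝ) + 1) * x))
        ≤ (N : ℝ) * (2 * Real.pi ^ 2 * x ^ 2 * (N : ℝ) ^ (2 - 2 * r)) := hsum1
      _ = 2 * Real.pi ^ 2 * x ^ 2 * ((N : ℝ) * (N : ℝ) ^ (2 - 2 * r)) := by ring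
      _ = 2 * Real.pi ^ 2 * x ^ 2 * (N : ℝ) ^ (3 - 2 * r) := by rw [e1]
      _ ≤ 2 * Real.pi ^ 2 * x ^ 2 * (1 / x) ^ (3 - 2 * r) := by
          have hc : (0:ℝ) ≤ 2 * Real.pi ^ 2 * x ^ 2 := by positivity
          exact mul_le_mul_of_nonneg_left e2 hc
      _ = 2 * Real.pi ^ 2 * (x ^ 2 * x ^ (2 * r - 3)) := by rw [e3]; ring
      _ = 2 * Real.pi ^ 2 * x ^ (2 * r - 1) := by rw [e4]
  -- tail bound
  have hA : Summable (fun i : ℕ => (((i + N : ℕ) : ℝ) + 1) ^ (-(2 * r)) *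
      (1 - Real.cos (2 * Real.pi * (((i + N : ℕ) : ℝ) + 1) * x))) :=
    (summable_nat_add_iff N).mpr hq
  have hB : Summable (fun i : ℕ => ((N : ℝ) + 1 + i) ^ (-(2 * r))) := by
    refine ((summable_nat_add_iff N).mpr hf).congr fun i => ?_
    congr 1
    push_cast
    ring
  have htail : ∑' i : ℕ, (((i + N : ℕ) : ℝ) + 1) ^ (-(2 * r)) *
      (1 - Real.cos (2 * Real.pi * (((i + N : ℕ) : ℝ) + 1) * x))
      ≤ 2 * ((N : ℝ) ^ (1 - 2 * r) * ∑' k : ℕ, ((k : ℝ) + 1) ^ (-(2 * r))) := by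
    have hstep : ∑' i : ℕ, (((i + N : ℕ) : ℝ) + 1) ^ (-(2 * r)) *
        (1 - Real.cos (2 * Real.pi * (((i + N : ℕ) : ℝ) + 1) * x))
        ≤ ∑' i : ℕ, 2 * ((N : ℝ) + 1 + i) ^ (-(2 * r)) := by
      refine Summable.tsum_le_tsum (fun i => ?_) hA (hB.mul_left 2)
      have hbase : ((i + N : ℕ) : ℝ) + 1 = (N : ℝ) + 1 + i := by push_cast; ring
      have hc2 : 1 - Real.cos (2 * Real.pi * (((i + N : ℕ) : ℝ) + 1) * x) ≤ 2 := by
        linarith [Real.neg_one_le_cos (2 * Real.pi * (((i + N : ℕ) : ℝ) + 1) * x)]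
      calc (((i + N : ℕ) : ℝ) + 1) ^ (-(2 * r)) *
          (1 - Real.cos (2 * Real.pi * (((i + N : ℕ) : ℝ) + 1) * x))
          ≤ (((i + N : ℕ) : ℝ) + 1) ^ (-(2 * r)) * 2 :=
            mul_le_mul_of_nonneg_left hc2 (by positivity)
        _ = 2 * ((N : ℝ) + 1 + i) ^ (-(2 * r)) := by rw [hbase]; ring
    rw [tsum_mul_left] at hstep
    have hblock := tail_block_aux (2 * r) hs1 N hNpos
    calc _ ≤ 2 * ∑' i : ℕ, ((N : ℝ) + 1 + i) ^ (-(2 * r)) := hstep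
      _ ≤ 2 * ((N : ℝ) ^ (1 - 2 * r) * ∑' k : ℕ, ((k : ℝ) + 1) ^ (-(2 * r))) := by
          linarith
  -- N^{1-2r} ≤ 2 x^{2r-1}
  have hNbound : (N : ℝ) ^ (1 - 2 * r) ≤ 2 * x ^ (2 * r - 1) := by
    have i1 : (N : ℝ)⁻¹ ≤ 2 * x := by
      rw [inv_eq_one_div, div_le_iff₀ hNRpos]
      nlinarith
    have i2 : (N : ℝ) ^ (1 - 2 * r) = ((N : ℝ)⁻¹) ^ (2 * r - 1) := by
      rw [Real.inv_rpow hNRpos.le, ← Real.rpow_neg hNRpos.le,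
        show -(2 * r - 1) = 1 - 2 * r by ring]
    have i3 : ((N : ℝ)⁻¹) ^ (2 * r - 1) ≤ (2 * x) ^ (2 * r - 1) :=
      Real.rpow_le_rpow (by positivity) i1 (by linarith)
    have i4 : (2 * x) ^ (2 * r - 1) = 2 ^ (2 * r - 1) * x ^ (2 * r - 1) :=
      Real.mul_rpow (by norm_num) hxpos.le
    have i5 : (2 : ℝ) ^ (2 * r - 1) ≤ 2 := by
      calc (2 : ℝ) ^ (2 * r - 1) ≤ 2 ^ (1 : ℝ) :=
            Real.rpow_le_rpow_of_exponent_le (by norm_num) (by linarith)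
        _ = 2 := Real.rpow_one 2
    calc (N : ℝ) ^ (1 - 2 * r) = ((N : ℝ)⁻¹) ^ (2 * r - 1) := i2
      _ ≤ (2 * x) ^ (2 * r - 1) := i3
      _ = 2 ^ (2 * r - 1) * x ^ (2 * r - 1) := i4
      _ ≤ 2 * x ^ (2 * r - 1) := mul_le_mul_of_nonneg_right i5 hxp_nn
  -- combine
  have hsplit := Summable.sum_add_tsum_nat_add (f := fun k : ℕ => ((k : ℝ) + 1) ^ (-(2 * r)) *
      (1 - Real.cos (2 * Real.pi * ((k : ℝ) + 1) * x))) N hq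
  have hheadnn : 0 ≤ ∑ k ∈ Finset.range N, ((k : ℝ) + 1) ^ (-(2 * r)) *
      (1 - Real.cos (2 * Real.pi * ((k : ℝ) + 1) * x)) :=
    Finset.sum_nonneg fun k _ => hqnn k
  have hSnn : (0:ℝ) ≤ ∑' k : ℕ, ((k : ℝ) + 1) ^ (-(2 * r)) := by linarith
  have hNpow_nn : (0:ℝ) ≤ (N : ℝ) ^ (1 - 2 * r) := Real.rpow_nonneg hNRpos.le _
  have htailnn : 0 ≤ ∑' i : ℕ, (((i + N : ℕ) : ℝ) + 1) ^ (-(2 * r)) *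
      (1 - Real.cos (2 * Real.pi * (((i + N : ℕ) : ℝ) + 1) * x)) :=
    tsum_nonneg fun i => hqnn (i + N)
  have hpile : Real.pi ≤ 4 := Real.pi_le_four
  -- final assembly
  rw [← hsplit]
  have hfinal1 : β₁ * (∑ k ∈ Finset.range N, ((k : ℝ) + 1) ^ (-(2 * r)) *
      (1 - Real.cos (2 * Real.pi * ((k : ℝ) + 1) * x)))
      ≤ 2 * Real.pi ^ 2 * x ^ (2 * r - 1) := by
    calc β₁ * _ ≤ 1 * (∑ k ∈ Finset.range N, ((k : ℝ) + 1) ^ (-(2 * r)) *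
          (1 - Real.cos (2 * Real.pi * ((k : ℝ) + 1) * x))) :=
          mul_le_mul_of_nonneg_right hb11 hheadnn
      _ = _ := one_mul _
      _ ≤ 2 * Real.pi ^ 2 * x ^ (2 * r - 1) := hhead
  have hfinal2 : β₁ * (∑' i : ℕ, (((i + N : ℕ) : ℝ) + 1) ^ (-(2 * r)) *
      (1 - Real.cos (2 * Real.pi * (((i + N : ℕ) : ℝ) + 1) * x)))
      ≤ 4 * x ^ (2 * r - 1) := by
    have s1 : β₁ * (∑' i : ℕ, (((i + N : ℕ) : ℝ) + 1) ^ (-(2 * r)) *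
        (1 - Real.cos (2 * Real.pi * (((i + N : ℕ) : ℝ) + 1) * x)))
        ≤ β₁ * (2 * ((N : ℝ) ^ (1 - 2 * r) * ∑' k : ℕ, ((k : ℝ) + 1) ^ (-(2 * r)))) :=
      mul_le_mul_of_nonneg_left htail hb1.le
    have s2 : β₁ * (2 * ((N : ℝ) ^ (1 - 2 * r) * ∑' k : ℕ, ((k : ℝ) + 1) ^ (-(2 * r))))
        = 2 * (N : ℝ) ^ (1 - 2 * r) * (β₁ * ∑' k : ℕ, ((k : ℝ) + 1) ^ (-(2 * r))) := by ring
    have s3 : 2 * (N : ℝ) ^ (1 - 2 * r) * (β₁ * ∑' k : ℕ, ((k : ℝ) + 1) ^ (-(2 * r)))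
        ≤ 2 * (N : ℝ) ^ (1 - 2 * r) * 1 :=
      mul_le_mul_of_nonneg_left hb1S (by positivity)
    have s4 : 2 * (N : ℝ) ^ (1 - 2 * r) * 1 ≤ 4 * x ^ (2 * r - 1) := by
      rw [mul_one]
      linarith
    linarith [s1, s2 ▸ s1]
  rw [mul_add]
  have hp2 : Real.pi ^ 2 ≤ 16 := by nlinarith
  have : 2 * Real.pi ^ 2 * x ^ (2 * r - 1) + 4 * x ^ (2 * r - 1) ≤ 40 * x ^ (2 * r - 1) := by
    nlinarith [mul_le_mul_of_nonneg_right hp2 hxp_nn]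
  linarith
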